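/- If R is a real square matrix of the form R = sI - A where s > ρ(A) (spectral radius) and A has all entries nonnegative, then R is invertible and every entry of R⁻¹ is nonnegative. -/

import Mathlib

open Matrix Filter
open scoped ENNReal NNReal

attribute [local instance] Matrix.linftyOpNormedRing Matrix.linftyOpNormedAlgebra

private lemma entry_abs_le_linfty {n : Type*} [Fintype n] [DecidableEq n] (M : Matrix n n ℝ) (i j : n) :
    |M i j| ≤ ‖M‖ := by
  have h : ‖M i j‖₊ ≤ ‖M‖₊ := by
    rw [Matrix.linfty_opNNNorm_def]
    refine le_trans ?_ (Finset.le_sup (f := fun i => ∑ j, ‖M i j‖₊) (Finset.mem_univ i))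
    exact Finset.single_le_sum (f := fun j => ‖M i j‖₊) (fun _ _ => zero_le) (Finset.mem_univ j)
  simpa [Real.norm_eq_abs] using (NNReal.coe_le_coe.mpr h : (‖M i j‖₊ : ℝ) ≤ ‖M‖₊)

private lemma norm_map_ofReal {n : Type*} [Fintype n] [DecidableEq n] (M : Matrix n n ℝ) :
    ‖M.map (Complex.ofReal ·)‖ = ‖M‖ := by
  have h : ‖M.map (Complex.ofReal ·)‖₊ = ‖M‖₊ := by
    simp_rw [Matrix.linfty_opNNNorm_def, Matrix.map_apply, Complex.nnnorm_real]
  calc ‖M.map (Complex.ofReal ·)‖ = (‖M.map (Complex.ofReal ·)‖₊ : ℝ) := rfl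
    _ = (‖M‖₊ : ℝ) := by rw [h]
    _ = ‖M‖ := rfl

private lemma pow_entries_nonneg {n : Type*} [Fintype n] [DecidableEq n]
    (B : Matrix n n ℝ) (hB : ∀ i j, 0 ≤ B i j) (m : ℕ) : ∀ i j, 0 ≤ (B ^ m) i j := by
  induction m with
  | zero => intro i j; simp [Matrix.one_apply]; positivity
  | succ m ih =>
    intro i j
    rw [pow_succ, Matrix.mul_apply]
    exact Finset.sum_nonneg fun l _ => mul_nonneg (ih i l) (hB l j)

theorem m_matrix_inverse_nonneg {n : Type*} [Fintype n] [DecidableEq n]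
    (A : Matrix n n ℝ) (s : ℝ)
    (hA : ∀ i j, 0 ≤ A i j)
    (hs : ∀ μ ∈ spectrum ℂ (A.map (Complex.ofReal ·)), ‖μ‖ < s)
    (R : Matrix n n ℝ) (hR : R = s • (1 : Matrix n n ℝ) - A) :
    IsUnit R ∧ ∀ i j, 0 ≤ R⁻¹ i j := by
  subst hR
  rcases isEmpty_or_nonempty n with h | h
  · refine ⟨?_, fun i j => h.elim i⟩
    have : (s • (1 : Matrix n n ℝ) - A) = 1 := by
      ext i j; exact h.elim i
    rw [this]; exact isUnit_one
  set Ac : Matrix n n ℂ := A.map (Complex.ofReal ·) with hAcdef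
  haveI : Nontrivial (Matrix n n ℂ) := by unfold Matrix; infer_instance
  -- s > 0
  obtain ⟨μ₀, hμ₀⟩ := spectrum.nonempty Ac
  have hs0 : 0 < s := lt_of_le_of_lt (norm_nonneg μ₀) (hs μ₀ hμ₀)
  -- invertibility over ℂ
  have hsnot : (s : ℂ) ∉ spectrum ℂ Ac := by
    intro hmem
    have := hs _ hmem
    rw [Complex.norm_real, Real.norm_eq_abs, abs_of_pos hs0] at this
    exact lt_irrefl _ this
  have hunitC : IsUnit ((s : ℂ) • (1 : Matrix n n ℂ) - Ac) := by
    have := spectrum.notMem_iff.mp hsnot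
    rwa [Algebra.algebraMap_eq_smul_one] at this
  have hmapR : ((s • (1 : Matrix n n ℝ) - A).map (Complex.ofReal ·))
      = (s : ℂ) • (1 : Matrix n n ℂ) - Ac := by
    ext i j
    simp only [Matrix.map_apply, Matrix.sub_apply, Matrix.smul_apply, Matrix.one_apply,
      hAcdef, smul_eq_mul]
    push_cast
    split_ifs <;> simp
  have hdetC : IsUnit ((s • (1 : Matrix n n ℝ) - A).map (Complex.ofReal ·)).det :=
    (Matrix.isUnit_iff_isUnit_det _).mp (hmapR ▸ hunitC)
  have hdetR : IsUnit (s • (1 : Matrix n n ℝ) - A).det := by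
    have h1 : ((s • (1 : Matrix n n ℝ) - A).map (Complex.ofReal ·)).det
        = ((s • (1 : Matrix n n ℝ) - A).det : ℂ) :=
      (RingHom.map_det Complex.ofRealHom _).symm
    rw [h1, isUnit_iff_ne_zero] at hdetC
    rw [isUnit_iff_ne_zero]
    exact fun h0 => hdetC (by rw [h0]; simp)
  have hunitR : IsUnit (s • (1 : Matrix n n ℝ) - A) :=
    (Matrix.isUnit_iff_isUnit_det _).mpr hdetR
  refine ⟨hunitR, ?_⟩
  -- set up B
  set B : Matrix n n ℝ := s⁻¹ • A with hBdef
  have hBnn : ∀ i j, 0 ≤ B i j := fun i j =>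
    mul_nonneg (inv_nonneg.mpr hs0.le) (hA i j)
  have hBc : B.map (Complex.ofReal ·) = ((s : ℂ))⁻¹ • Ac := by
    ext i j
    simp only [Matrix.map_apply, Matrix.smul_apply, hBdef, hAcdef, smul_eq_mul]
    push_cast
    ring
  -- spectral radius of Bc < 1
  have hrad : spectralRadius ℂ (B.map (Complex.ofReal ·)) < 1 := by
    rw [hBc]
    obtain ⟨z, hz, hz'⟩ := spectrum.exists_nnnorm_eq_spectralRadius (((s : ℂ))⁻¹ • Ac)
    rw [← hz']
    rw [spectrum.smul_eq_smul _ _ (spectrum.nonempty Ac)] at hz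
    obtain ⟨μ, hμ, rfl⟩ := hz
    have habs : ‖μ‖ < s := hs μ hμ
    have : ‖((s : ℂ))⁻¹ • μ‖ < 1 := by
      rw [norm_smul, norm_inv, Complex.norm_real, Real.norm_eq_abs, abs_of_pos hs0]
      rw [← div_eq_inv_mul, div_lt_one hs0]
      exact habs
    exact_mod_cast (by exact_mod_cast this : ‖((s : ℂ))⁻¹ • μ‖₊ < 1)
  -- Gelfand: pick k with ‖(B.map (Complex.ofReal ·)) ^ k‖ < 1
  have hG := spectrum.pow_nnnorm_pow_one_div_tendsto_nhds_spectralRadius (B.map (Complex.ofReal ·))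
  obtain ⟨k, hk, hk1⟩ := ((hG.eventually_lt_const hrad).and (eventually_ge_atTop 1)).exists
  have hck : ‖(B.map (Complex.ofReal ·)) ^ k‖ < 1 := by
    by_contra hcon
    push_neg at hcon
    have h1 : (1 : ℝ≥0∞) ≤ (‖(B.map (Complex.ofReal ·)) ^ k‖₊ : ℝ≥0∞) := by
      exact_mod_cast (by exact_mod_cast hcon : (1 : ℝ≥0) ≤ ‖(B.map (Complex.ofReal ·)) ^ k‖₊)
    have h2 : (1 : ℝ≥0∞) ≤ (‖(B.map (Complex.ofReal ·)) ^ k‖₊ : ℝ≥0∞) ^ (1 / (k : ℝ)) := by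
      calc (1 : ℝ≥0∞) = 1 ^ (1 / (k : ℝ)) := by rw [ENNReal.one_rpow]
        _ ≤ _ := ENNReal.rpow_le_rpow h1 (by positivity)
    exact absurd hk (not_lt.mpr h2)
  -- transfer to ℝ
  have hmap_pow : ∀ m : ℕ, (B.map (Complex.ofReal ·)) ^ m = (B ^ m).map (Complex.ofReal ·) := by
    intro m
    have h0 : B.map (Complex.ofReal ·) = Complex.ofRealHom.mapMatrix B := rfl
    rw [h0, ← map_pow]
    rfl
  set c : ℝ := ‖(B ^ k : Matrix n n ℝ)‖ with hcdef
  have hc1 : c < 1 := by rw [hcdef, ← norm_map_ofReal, ← hmap_pow]; exact hck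
  have hc0 : 0 ≤ c := norm_nonneg _
  -- relate R and 1 - B
  have hRB : s • (1 : Matrix n n ℝ) - A = s • (1 - B) := by
    rw [smul_sub, hBdef, smul_smul, mul_inv_cancel₀ hs0.ne', one_smul]
  have hunit1B : IsUnit ((1 : Matrix n n ℝ) - B) := by
    have := hunitR
    rw [hRB] at this
    rcases this with ⟨u, hu⟩
    have : IsUnit ((1 - B).det) := by
      have hdet : IsUnit (s • ((1 : Matrix n n ℝ) - B)).det := hRB ▸ hdetR
      rw [Matrix.det_smul] at hdet
      rcases isUnit_iff_ne_zero.mp hdet with hne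
      exact isUnit_iff_ne_zero.mpr (by
        intro h0
        exact hne (by rw [h0, mul_zero]))
    exact (Matrix.isUnit_iff_isUnit_det _).mpr this
  have hdet1B : IsUnit ((1 : Matrix n n ℝ) - B).det := (Matrix.isUnit_iff_isUnit_det _).mp hunit1B
  set C : Matrix n n ℝ := ((1 : Matrix n n ℝ) - B)⁻¹ with hCdef
  have hCmul : C * ((1 : Matrix n n ℝ) - B) = 1 := Matrix.nonsing_inv_mul _ hdet1B
  -- partial sums
  have hSq : ∀ q : ℕ, (∑ i ∈ Finset.range (k * q), B ^ i) = C - C * B ^ (k * q) := by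
    intro q
    have hgeom : ((1 : Matrix n n ℝ) - B) * (∑ i ∈ Finset.range (k * q), B ^ i)
        = 1 - B ^ (k * q) := mul_neg_geom_sum B (k * q)
    calc (∑ i ∈ Finset.range (k * q), B ^ i)
        = C * (((1 : Matrix n n ℝ) - B) * (∑ i ∈ Finset.range (k * q), B ^ i)) := by
          rw [← Matrix.mul_assoc, hCmul, Matrix.one_mul]
      _ = C * (1 - B ^ (k * q)) := by rw [hgeom]
      _ = C - C * B ^ (k * q) := by rw [Matrix.mul_sub, Matrix.mul_one]
  -- entries of C nonneg
  have hCnn : ∀ i j, 0 ≤ C i j := by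
    intro i j
    have hterm : ∀ q : ℕ, 1 ≤ q → -(‖C‖ * c ^ q) ≤ C i j := by
      intro q hq
      have hS : 0 ≤ (∑ i' ∈ Finset.range (k * q), B ^ i') i j := by
        rw [Matrix.sum_apply]
        exact Finset.sum_nonneg fun m _ => by
          simpa using pow_entries_nonneg B hBnn m i j
      have hbound : |(C * B ^ (k * q)) i j| ≤ ‖C‖ * c ^ q := by
        refine le_trans (entry_abs_le_linfty _ i j) ?_
        refine le_trans (norm_mul_le _ _) ?_
        refine mul_le_mul_of_nonneg_left ?_ (norm_nonneg C)
        calc ‖B ^ (k * q)‖ = ‖(B ^ k) ^ q‖ := by rw [← pow_mul]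
          _ ≤ ‖B ^ k‖ ^ q := norm_pow_le' _ hq
          _ = c ^ q := rfl
      have hEq : C i j = (∑ i' ∈ Finset.range (k * q), B ^ i') i j + (C * B ^ (k * q)) i j := by
        rw [hSq q]
        simp [Matrix.sub_apply]
      have : -(‖C‖ * c ^ q) ≤ (C * B ^ (k * q)) i j := neg_le_of_abs_le hbound
      calc -(‖C‖ * c ^ q) ≤ (C * B ^ (k * q)) i j := this
        _ ≤ (∑ i' ∈ Finset.range (k * q), B ^ i') i j + (C * B ^ (k * q)) i j := by linarith
        _ = C i j := hEq.symm
    have hlim : Filter.Tendsto (fun q : ℕ => -(‖C‖ * c ^ q)) atTop (nhds 0) := by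
      have : Filter.Tendsto (fun q : ℕ => c ^ q) atTop (nhds 0) :=
        tendsto_pow_atTop_nhds_zero_of_lt_one hc0 hc1
      have h2 := (this.const_mul ‖C‖).neg
      simpa using h2
    exact le_of_tendsto hlim (Filter.eventually_atTop.mpr ⟨1, hterm⟩)
  -- conclude
  intro i j
  rw [hRB]
  have hinv : (s • ((1 : Matrix n n ℝ) - B))⁻¹ = s⁻¹ • C := by
    apply Matrix.inv_eq_right_inv
    rw [Matrix.smul_mul, Matrix.mul_smul, Matrix.mul_nonsing_inv _ hdet1B, smul_smul,
      mul_inv_cancel₀ hs0.ne', one_smul]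
  rw [hinv]
  simp only [Matrix.smul_apply, smul_eq_mul]
  exact mul_nonneg (by positivity) (hCnn i j)
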